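/- Let g be a non-abelian nilpotent four-dimensional real Lie algebra admitting a Kähler structure (J, ω). Then g is isomorphic, as a real Lie algebra, to ℝ×h₃, and the complex structure J is abelian, i.e. [Jx,Jy] = [x,y] for all x, y ∈ g. -/

import Mathlib

section KahlerDefs

variable {L : Type*} [LieRing L] [LieAlgebra ℝ L]

def IsComplexStructure (J : Module.End ℝ L) : Prop :=
  (∀ x, J (J x) = -x) ∧
  ∀ x y : L, ⁅J x, J y⁆ - ⁅x, y⁆ - J ⁅J x, y⁆ - J ⁅x, J y⁆ = 0

def IsSymplecticForm (ω : L →ₗ[ℝ] L →ₗ[ℝ] ℝ) : Prop :=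
  (∀ x, ω x x = 0) ∧
  (∀ x, (∀ y, ω x y = 0) → x = 0) ∧
  ∀ x y z : L, ω ⁅x, y⁆ z + ω ⁅y, z⁆ x + ω ⁅z, x⁆ y = 0

def IsKahlerStructure (J : Module.End ℝ L) (ω : L →ₗ[ℝ] L →ₗ[ℝ] ℝ) : Prop :=
  IsComplexStructure J ∧ IsSymplecticForm ω ∧ ∀ x y : L, ω (J x) (J y) = ω x y

def IsLeviCivita (J : Module.End ℝ L) (ω : L →ₗ[ℝ] L →ₗ[ℝ] ℝ)
    (D : L →ₗ[ℝ] L →ₗ[ℝ] L) : Prop :=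
  ∀ x y z : L,
    2 * ω (J (D x y)) z = ω (J ⁅x, y⁆) z - ω (J ⁅y, z⁆) x + ω (J ⁅z, x⁆) y

noncomputable def ricci (D : L →ₗ[ℝ] L →ₗ[ℝ] L) (x y : L) : ℝ :=
  - LinearMap.trace ℝ L
      ((D x) ∘ₗ (D.flip y) - D.flip (D x y) - (D.flip y) ∘ₗ (LieAlgebra.ad ℝ L x))

def IsFlat (D : L →ₗ[ℝ] L →ₗ[ℝ] L) : Prop :=
  ∀ x y z : L, D x (D y z) - D y (D x z) - D ⁅x, y⁆ z = 0

end KahlerDefs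

section Models

variable (M : Type*) [LieRing M] [LieAlgebra ℝ M]

def IsRxH3 : Prop :=
  ∃ b : Module.Basis (Fin 4) ℝ M,
    ⁅b 0, b 1⁆ = b 2 ∧ ⁅b 0, b 2⁆ = 0 ∧ ⁅b 0, b 3⁆ = 0 ∧
    ⁅b 1, b 2⁆ = 0 ∧ ⁅b 1, b 3⁆ = 0 ∧ ⁅b 2, b 3⁆ = 0

def IsR2xAffR : Prop :=
  ∃ b : Module.Basis (Fin 4) ℝ M,
    ⁅b 0, b 1⁆ = b 1 ∧ ⁅b 0, b 2⁆ = 0 ∧ ⁅b 0, b 3⁆ = 0 ∧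
    ⁅b 1, b 2⁆ = 0 ∧ ⁅b 1, b 3⁆ = 0 ∧ ⁅b 2, b 3⁆ = 0

def IsRxE2 : Prop :=
  ∃ b : Module.Basis (Fin 4) ℝ M,
    ⁅b 0, b 1⁆ = -b 2 ∧ ⁅b 0, b 2⁆ = b 1 ∧ ⁅b 0, b 3⁆ = 0 ∧
    ⁅b 1, b 2⁆ = 0 ∧ ⁅b 1, b 3⁆ = 0 ∧ ⁅b 2, b 3⁆ = 0

def IsAffRxAffR : Prop :=
  ∃ b : Module.Basis (Fin 4) ℝ M,
    ⁅b 0, b 1⁆ = b 1 ∧ ⁅b 0, b 2⁆ = 0 ∧ ⁅b 0, b 3⁆ = 0 ∧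
    ⁅b 1, b 2⁆ = 0 ∧ ⁅b 1, b 3⁆ = 0 ∧ ⁅b 2, b 3⁆ = b 3

def IsAffC : Prop :=
  ∃ b : Module.Basis (Fin 4) ℝ M,
    ⁅b 0, b 1⁆ = 0 ∧ ⁅b 0, b 2⁆ = b 2 ∧ ⁅b 0, b 3⁆ = b 3 ∧
    ⁅b 1, b 2⁆ = b 3 ∧ ⁅b 1, b 3⁆ = -b 2 ∧ ⁅b 2, b 3⁆ = 0

def IsR4m1m1 : Prop :=
  ∃ b : Module.Basis (Fin 4) ℝ M,
    ⁅b 3, b 0⁆ = b 0 ∧ ⁅b 3, b 1⁆ = -b 1 ∧ ⁅b 3, b 2⁆ = -b 2 ∧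
    ⁅b 0, b 1⁆ = 0 ∧ ⁅b 0, b 2⁆ = 0 ∧ ⁅b 1, b 2⁆ = 0

def IsR4'0 (δ : ℝ) : Prop :=
  ∃ b : Module.Basis (Fin 4) ℝ M,
    ⁅b 3, b 0⁆ = b 0 ∧ ⁅b 3, b 1⁆ = -(δ • b 2) ∧ ⁅b 3, b 2⁆ = δ • b 1 ∧
    ⁅b 0, b 1⁆ = 0 ∧ ⁅b 0, b 2⁆ = 0 ∧ ⁅b 1, b 2⁆ = 0

def IsD4 (lam : ℝ) : Prop :=
  ∃ b : Module.Basis (Fin 4) ℝ M,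
    ⁅b 0, b 1⁆ = b 2 ∧ ⁅b 3, b 0⁆ = lam • b 0 ∧ ⁅b 3, b 1⁆ = (1 - lam) • b 1 ∧
    ⁅b 3, b 2⁆ = b 2 ∧ ⁅b 0, b 2⁆ = 0 ∧ ⁅b 1, b 2⁆ = 0

def IsD4' (δ : ℝ) : Prop :=
  ∃ b : Module.Basis (Fin 4) ℝ M,
    ⁅b 0, b 1⁆ = b 2 ∧ ⁅b 3, b 0⁆ = (δ / 2) • b 0 - b 1 ∧
    ⁅b 3, b 1⁆ = b 0 + (δ / 2) • b 1 ∧ ⁅b 3, b 2⁆ = δ • b 2 ∧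
    ⁅b 0, b 2⁆ = 0 ∧ ⁅b 1, b 2⁆ = 0

end Models

section AuxLemmas

variable {L : Type*} [LieRing L] [LieAlgebra ℝ L]

lemma eq_zero_of_self_eq_lie [LieRing.IsNilpotent L] (x y : L) (h : x = ⁅y, x⁆) :
    x = 0 := by
  obtain ⟨k, hk⟩ := LieModule.IsNilpotent.nilpotent (R := ℝ) (L := L) (M := L)
  have hmem : ∀ k, x ∈ LieModule.lowerCentralSeries ℝ L L k := by
    intro k
    induction k with
    | zero => simp
    | succ k ih =>
      rw [LieModule.lowerCentralSeries_succ, h]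
      exact LieSubmodule.lie_mem_lie (LieSubmodule.mem_top y) ih
  simpa [hk] using hmem k

lemma pair_aux (J : Module.End ℝ L) (hJ : ∀ x, J (J x) = -x) {x : L} (hx : x ≠ 0)
    {a b : ℝ} (h : a • x + b • J x = 0) : a = 0 ∧ b = 0 := by
  have h2 : b • x - a • J x = 0 := by
    have h' := congrArg J h
    simp only [map_add, map_smul, hJ, map_zero, smul_neg] at h'
    linear_combination (norm := module) -h'
  have h3 : (a * a + b * b) • x = 0 := by
    have ha := congrArg (a • ·) h
    have hb := congrArg (b • ·) h2
    simp only [smul_add, smul_sub, smul_smul, smul_zero] at ha hb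
    linear_combination (norm := module) ha + hb
  have h4 : a * a + b * b = 0 := by
    rcases smul_eq_zero.mp h3 with h5 | h5
    · exact h5
    · exact absurd h5 hx
  constructor <;> nlinarith

set_option maxHeartbeats 2000000 in
theorem nilpotent_kahler_classification'
    {L : Type*} [LieRing L] [LieAlgebra ℝ L] [LieRing.IsNilpotent L]
    (hdim : Module.finrank ℝ L = 4)
    (hnab : ¬ ∀ x y : L, ⁅x, y⁆ = 0)
    (J : Module.End ℝ L)
    (hJ2 : ∀ x, J (J x) = -x)
    (hN : ∀ x y : L, ⁅J x, J y⁆ - ⁅x, y⁆ - J ⁅J x, y⁆ - J ⁅x, J y⁆ = 0) :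
    IsRxH3 L ∧ ∀ x y : L, ⁅J x, J y⁆ = ⁅x, y⁆ := by
  classical
  have hfin : FiniteDimensional ℝ L := Module.finite_of_finrank_pos (by rw [hdim]; norm_num)
  have hnt : Nontrivial L := Module.nontrivial_of_finrank_pos (R := ℝ) (by rw [hdim]; norm_num)
  -- a nonzero central element
  have hcnt : Nontrivial (LieAlgebra.center ℝ L) :=
    LieAlgebra.non_trivial_center_of_isNilpotent
  obtain ⟨z', hz'⟩ := exists_ne (0 : LieAlgebra.center ℝ L)
  set z : L := (z' : L) with hzdef
  have hz0 : z ≠ 0 := by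
    simpa [hzdef] using Subtype.coe_injective.ne hz'
  have hzc : ∀ x : L, ⁅x, z⁆ = 0 := z'.2
  have hzc' : ∀ x : L, ⁅z, x⁆ = 0 := fun x => by rw [← lie_skew, hzc, neg_zero]
  set w : L := J z with hwdef
  have hw0 : w ≠ 0 := by
    intro h
    apply hz0
    have := hJ2 z
    rw [← hwdef, h, map_zero] at this
    exact neg_eq_zero.mp this.symm
  -- commutation: ⁅w, J x⁆ = J ⁅w, x⁆
  have hcomm : ∀ x : L, ⁅w, J x⁆ = J ⁅w, x⁆ := by
    intro x
    have h := hN x z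
    rw [hzc x, hzc (J x)] at h
    simp only [map_zero, sub_zero] at h
    have h' : ⁅J x, w⁆ = J ⁅x, w⁆ := by rw [hwdef]; exact sub_eq_zero.mp h
    rw [← lie_skew, h', ← map_neg, lie_skew]
  have hJz : J z = w := rfl
  have hJw : J w = -z := by rw [hwdef, hJ2]
  by_cases hwc : ∀ x : L, ⁅w, x⁆ = 0
  · -- w central : main case
    have hwc' : ∀ x : L, ⁅x, w⁆ = 0 := fun x => by rw [← lie_skew, hwc, neg_zero]
    set P : Submodule ℝ L := Submodule.span ℝ {z, w} with hPdef
    have hzP : z ∈ P := Submodule.subset_span (by simp)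
    have hwP : w ∈ P := Submodule.subset_span (by simp)
    have hPJ : ∀ p ∈ P, J p ∈ P := by
      intro p hp
      obtain ⟨a, b, hab⟩ := Submodule.mem_span_pair.1 hp
      have hJp : J p = (-b) • z + a • w := by
        rw [← hab]; simp only [map_add, map_smul, hJz, hJw]
        module
      rw [hJp]
      exact Submodule.add_mem _ (Submodule.smul_mem _ _ hzP) (Submodule.smul_mem _ _ hwP)
    have hliz : LinearIndependent ℝ ![z, w] :=
      LinearIndependent.pair_iff.2 fun s t hst => pair_aux J hJ2 hz0 hst
    have hrzw : Set.range ![z, w] = {z, w} := by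
      ext p; simp [Fin.exists_fin_two, or_comm]
    have hPrank : Module.finrank ℝ P = 2 := by
      have := finrank_span_eq_card hliz
      rw [hrzw] at this
      rw [hPdef, this]; rfl
    have hPne : P ≠ ⊤ := by
      intro h; rw [h, finrank_top, hdim] at hPrank; norm_num at hPrank
    obtain ⟨u, huP⟩ : ∃ u : L, u ∉ P := by
      by_contra h; push_neg at h; exact hPne (Submodule.eq_top_iff'.2 h)
    set v : L := J u with hvdef
    have hJu : J u = v := rfl
    have hJv : J v = -u := by rw [hvdef, hJ2]
    have hquad : ∀ p ∈ P, ∀ s t : ℝ, p + s • u + t • v = 0 → p = 0 ∧ s = 0 ∧ t = 0 := by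
      intro p hp s t heq
      have heq2 : J p - t • u + s • v = 0 := by
        have h' := congrArg J heq
        simp only [map_add, map_smul, map_zero, hJu, hJv, smul_neg] at h'
        linear_combination (norm := module) h'
      have hst : (s*s + t*t) • u = t • J p - s • p := by
        linear_combination (norm := module) s • heq - t • heq2
      have hst0 : s = 0 ∧ t = 0 := by
        by_contra hcon
        have hne : s*s + t*t ≠ 0 := by
          intro h0
          exact hcon ⟨by nlinarith, by nlinarith⟩
        exfalso; apply huP
        have hueq : u = (s*s+t*t)⁻¹ • (t • J p - s • p) := by
          rw [← hst, smul_smul, inv_mul_cancel₀ hne, one_smul]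
        rw [hueq]
        exact Submodule.smul_mem _ _ (Submodule.sub_mem _
          (Submodule.smul_mem _ _ (hPJ p hp)) (Submodule.smul_mem _ _ hp))
      obtain ⟨hs, ht⟩ := hst0
      refine ⟨?_, hs, ht⟩
      rw [hs, ht] at heq; simpa using heq
    have hli1 : LinearIndependent ℝ ![z, w, u, v] := by
      apply Fintype.linearIndependent_iff.2
      intro g hg
      rw [Fin.sum_univ_four] at hg
      simp only [Matrix.cons_val_zero, Matrix.cons_val_one, Matrix.head_cons,
        Matrix.cons_val_two, Matrix.tail_cons, Matrix.cons_val_three] at hg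
      have hp : g 0 • z + g 1 • w ∈ P :=
        Submodule.add_mem _ (Submodule.smul_mem _ _ hzP) (Submodule.smul_mem _ _ hwP)
      have hg' : (g 0 • z + g 1 • w) + g 2 • u + g 3 • v = 0 := by
        linear_combination (norm := module) hg
      obtain ⟨hp0, h2, h3⟩ := hquad _ hp _ _ hg'
      obtain ⟨h0, h1⟩ := pair_aux J hJ2 hz0 hp0
      intro i; fin_cases i <;> assumption
    have hcard : Fintype.card (Fin 4) = Module.finrank ℝ L := by simp [hdim]
    set B₁ := basisOfLinearIndependentOfCardEqFinrank hli1 hcard with hB₁def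
    have hB₁ : ⇑B₁ = ![z, w, u, v] := coe_basisOfLinearIndependentOfCardEqFinrank _ _
    have hexp : ∀ x : L, ∃ a b s t : ℝ, x = a • z + b • w + s • u + t • v := by
      intro x
      refine ⟨B₁.repr x 0, B₁.repr x 1, B₁.repr x 2, B₁.repr x 3, ?_⟩
      have h := B₁.sum_repr x
      rw [Fin.sum_univ_four] at h
      simp only [hB₁, Matrix.cons_val_zero, Matrix.cons_val_one, Matrix.head_cons,
        Matrix.cons_val_two, Matrix.tail_cons, Matrix.cons_val_three] at h
      exact h.symm
    set c : L := ⁅u, v⁆ with hcdef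
    have hvu : ⁅v, u⁆ = -c := by rw [hcdef, ← lie_skew]
    have hbr : ∀ x y : L, ∃ r : ℝ, ⁅x, y⁆ = r • c := by
      intro x y
      obtain ⟨a1, b1, s1, t1, hx⟩ := hexp x
      obtain ⟨a2, b2, s2, t2, hy⟩ := hexp y
      refine ⟨s1*t2 - t1*s2, ?_⟩
      rw [hx, hy]
      simp only [add_lie, lie_add, smul_lie, lie_smul, hzc, hzc', hwc, hwc',
        lie_self, smul_zero, zero_add, add_zero, hvu, ← hcdef, smul_neg]
      module
    have hcne : c ≠ 0 := by
      intro h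
      apply hnab
      intro x y
      obtain ⟨r, hr⟩ := hbr x y
      rw [hr, h, smul_zero]
    -- c lies in P
    obtain ⟨ca, cb, cs, ct, hcx⟩ := hexp c
    have huc : ⁅u, c⁆ = ct • c := by
      conv_lhs => rw [hcx]
      simp only [lie_add, lie_smul, hzc, hwc', lie_self, smul_zero, zero_add, add_zero, ← hcdef]
    have hct : ct = 0 := by
      by_contra h
      apply hcne
      apply eq_zero_of_self_eq_lie c (ct⁻¹ • u)
      rw [smul_lie, huc, smul_smul, inv_mul_cancel₀ h, one_smul]
    have hvc : ⁅v, c⁆ = (-cs) • c := by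
      conv_lhs => rw [hcx]
      simp only [lie_add, lie_smul, hzc, hwc', lie_self, smul_zero, zero_add, add_zero, hvu]
      module
    have hcs : cs = 0 := by
      by_contra h
      apply hcne
      apply eq_zero_of_self_eq_lie c ((-cs)⁻¹ • v)
      rw [smul_lie, hvc, smul_smul, inv_mul_cancel₀ (neg_ne_zero.2 h), one_smul]
    have hcP : c = ca • z + cb • w := by
      rw [hcx, hct, hcs]; simp
    have hccent : ∀ x : L, ⁅x, c⁆ = 0 := by
      intro x; rw [hcP]; simp only [lie_add, lie_smul, hzc, hwc', smul_zero, add_zero]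
    have hccent' : ∀ x : L, ⁅c, x⁆ = 0 := fun x => by rw [← lie_skew, hccent, neg_zero]
    have hcPmem : c ∈ P := by
      rw [hcP]
      exact Submodule.add_mem _ (Submodule.smul_mem _ _ hzP) (Submodule.smul_mem _ _ hwP)
    have hJcP : J c ∈ P := hPJ c hcPmem
    obtain ⟨da, db, hJcx⟩ := Submodule.mem_span_pair.1 hJcP
    have hJccent : ∀ x : L, ⁅x, J c⁆ = 0 := by
      intro x; rw [← hJcx]
      simp only [lie_add, lie_smul, hzc, hwc', smul_zero, add_zero]
    have hli2 : LinearIndependent ℝ ![u, v, c, J c] := by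
      apply Fintype.linearIndependent_iff.2
      intro g hg
      rw [Fin.sum_univ_four] at hg
      simp only [Matrix.cons_val_zero, Matrix.cons_val_one, Matrix.head_cons,
        Matrix.cons_val_two, Matrix.tail_cons, Matrix.cons_val_three] at hg
      have hpmem : g 2 • c + g 3 • J c ∈ P :=
        Submodule.add_mem _ (Submodule.smul_mem _ _ hcPmem) (Submodule.smul_mem _ _ hJcP)
      have hg' : (g 2 • c + g 3 • J c) + g 0 • u + g 1 • v = 0 := by
        linear_combination (norm := module) hg
      obtain ⟨hp0, h0, h1⟩ := hquad _ hpmem _ _ hg'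
      obtain ⟨h2, h3⟩ := pair_aux J hJ2 hcne hp0
      intro i; fin_cases i <;> assumption
    set B₂ := basisOfLinearIndependentOfCardEqFinrank hli2 hcard with hB₂def
    have hB₂ : ⇑B₂ = ![u, v, c, J c] := coe_basisOfLinearIndependentOfCardEqFinrank _ _
    constructor
    · refine ⟨B₂, ?_, ?_, ?_, ?_, ?_, ?_⟩ <;>
        simp only [hB₂, Matrix.cons_val_zero, Matrix.cons_val_one, Matrix.head_cons,
          Matrix.cons_val_two, Matrix.tail_cons, Matrix.cons_val_three]
      · exact hcdef.symm
      · exact hccent u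
      · exact hJccent u
      · exact hccent v
      · exact hJccent v
      · exact hJccent c
    · intro x y
      obtain ⟨r1, h1⟩ := hbr (J x) (J y)
      obtain ⟨r2, h2⟩ := hbr x y
      obtain ⟨r3, h3⟩ := hbr (J x) y
      obtain ⟨r4, h4⟩ := hbr x (J y)
      have hNxy := hN x y
      rw [h1, h2, h3, h4] at hNxy
      simp only [map_smul] at hNxy
      have hco : (r1 - r2) • c + (-(r3 + r4)) • J c = 0 := by
        linear_combination (norm := module) hNxy
      obtain ⟨e1, e2⟩ := pair_aux J hJ2 hcne hco
      rw [h1, h2, show r1 = r2 by linarith]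
  · -- w not central : contradiction
    exfalso
    push_neg at hwc
    obtain ⟨u₀, hu₀⟩ := hwc
    set f : Module.End ℝ L := LieModule.toEnd ℝ L L w with hfdef
    have hfapp : ∀ x : L, f x = ⁅w, x⁆ := fun x => rfl
    have hfnil : IsNilpotent f := LieModule.isNilpotent_toEnd_of_isNilpotent ℝ L L w
    set y : L := ⁅w, u₀⁆ with hydef
    have hy0 : y ≠ 0 := hu₀
    have hyr : y ∈ LinearMap.range f := ⟨u₀, rfl⟩
    have hrJ : ∀ x ∈ LinearMap.range f, J x ∈ LinearMap.range f := by
      rintro x ⟨t, rfl⟩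
      refine ⟨J t, ?_⟩
      rw [hfapp, hfapp]
      exact hcomm t
    have hyJ : J y ∈ LinearMap.range f := hrJ y hyr
    have hliy : LinearIndependent ℝ ![y, J y] :=
      LinearIndependent.pair_iff.2 fun s t hst => pair_aux J hJ2 hy0 hst
    have hry : Set.range ![y, J y] = {y, J y} := by
      ext p; simp [Fin.exists_fin_two, or_comm]
    have h2r : 2 ≤ Module.finrank ℝ (LinearMap.range f) := by
      have hfr2 := finrank_span_eq_card hliy
      rw [hry] at hfr2
      have hle : Submodule.span ℝ {y, J y} ≤ LinearMap.range f := by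
        rw [Submodule.span_le]
        intro p hp
        simp only [Set.mem_insert_iff, Set.mem_singleton_iff] at hp
        rcases hp with rfl | rfl
        exacts [hyr, hyJ]
      calc 2 = Module.finrank ℝ (Submodule.span ℝ ({y, J y} : Set L)) := by
              rw [hfr2]; rfl
        _ ≤ _ := Submodule.finrank_mono hle
    have hrn := LinearMap.finrank_range_add_finrank_ker f
    rw [hdim] at hrn
    have hkle : Module.finrank ℝ (LinearMap.ker f) ≤ 2 := by omega
    have hliz : LinearIndependent ℝ ![z, w] :=
      LinearIndependent.pair_iff.2 fun s t hst => pair_aux J hJ2 hz0 hst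
    have hrzw : Set.range ![z, w] = {z, w} := by
      ext p; simp [Fin.exists_fin_two, or_comm]
    have hSrank : Module.finrank ℝ (Submodule.span ℝ ({z, w} : Set L)) = 2 := by
      have := finrank_span_eq_card hliz
      rw [hrzw] at this
      rw [this]; rfl
    have hSle : Submodule.span ℝ ({z, w} : Set L) ≤ LinearMap.ker f := by
      rw [Submodule.span_le]
      intro p hp
      simp only [Set.mem_insert_iff, Set.mem_singleton_iff] at hp
      rcases hp with rfl | rfl
      · exact LinearMap.mem_ker.2 ((hfapp z).trans (hzc w))
      · exact LinearMap.mem_ker.2 ((hfapp w).trans (lie_self w))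
    have hkerS : Submodule.span ℝ ({z, w} : Set L) = LinearMap.ker f :=
      Submodule.eq_of_le_of_finrank_le hSle (by rw [hSrank]; exact hkle)
    obtain ⟨n, hn⟩ := hfnil
    have hPex : ∃ m, (f ^ m) y = 0 := ⟨n, by rw [hn]; rfl⟩
    set n₀ := Nat.find hPex with hn₀def
    have hspec : (f ^ n₀) y = 0 := Nat.find_spec hPex
    have hn₀0 : n₀ ≠ 0 := by
      intro h
      rw [h, pow_zero] at hspec
      exact hy0 (by simpa using hspec)
    set r : L := (f ^ (n₀ - 1)) y with hrdef
    have hr0 : r ≠ 0 := Nat.find_min hPex (Nat.sub_lt (Nat.pos_of_ne_zero hn₀0) one_pos)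
    have hps : f * f ^ (n₀ - 1) = f ^ n₀ := by
      rw [← pow_succ']
      congr 1
      omega
    have hfr : f r = 0 := by
      rw [hrdef, ← Module.End.mul_apply, hps]
      exact hspec
    have hfu : f u₀ = y := by rw [hfapp]
    have hrrange : r ∈ LinearMap.range f := by
      refine ⟨(f ^ (n₀ - 1)) u₀, ?_⟩
      calc f ((f ^ (n₀ - 1)) u₀)
          = (f ^ (n₀ - 1)) (f u₀) := by
            rw [← Module.End.mul_apply, ← pow_mul_comm', Module.End.mul_apply]
        _ = (f ^ (n₀ - 1)) y := by rw [hfu]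
        _ = r := hrdef.symm
    have hrS : r ∈ Submodule.span ℝ ({z, w} : Set L) := by
      rw [hkerS]; exact LinearMap.mem_ker.2 hfr
    obtain ⟨a, b, hab⟩ := Submodule.mem_span_pair.1 hrS
    have hJr : J r ∈ LinearMap.range f := hrJ r hrrange
    have habne : a * a + b * b ≠ 0 := by
      intro h
      apply hr0
      have ha : a = 0 := by nlinarith
      have hb : b = 0 := by nlinarith
      rw [← hab, ha, hb]; simp
    have hwrange : w ∈ LinearMap.range f := by
      have hJrv : J r = a • w - b • z := by
        rw [← hab]; simp only [map_add, map_smul, hJz, hJw]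
        module
      have hkey : b • r + a • J r = (a*a+b*b) • w := by
        rw [hJrv, ← hab]
        module
      have hcomb : w = (a*a+b*b)⁻¹ • (b • r + a • J r) := by
        rw [hkey, smul_smul, inv_mul_cancel₀ habne, one_smul]
      rw [hcomb]
      exact Submodule.smul_mem _ _ (Submodule.add_mem _
        (Submodule.smul_mem _ _ hrrange) (Submodule.smul_mem _ _ hJr))
    obtain ⟨v', hv'⟩ := hwrange
    have hself : w = ⁅-v', w⁆ := by
      rw [neg_lie, lie_skew]
      rw [hfapp] at hv'
      exact hv'.symm
    exact hw0 (eq_zero_of_self_eq_lie w (-v') hself)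

end AuxLemmas

/-- A non-abelian nilpotent four-dimensional Kähler Lie algebra is isomorphic
to ℝ×h₃ and the complex structure is abelian. -/
theorem nilpotent_kahler_classification
    {L : Type*} [LieRing L] [LieAlgebra ℝ L] [LieRing.IsNilpotent L]
    (hdim : Module.finrank ℝ L = 4)
    (hnab : ¬ ∀ x y : L, ⁅x, y⁆ = 0)
    (J : Module.End ℝ L) (ω : L →ₗ[ℝ] L →ₗ[ℝ] ℝ)
    (hK : IsKahlerStructure J ω) :
    IsRxH3 L ∧ ∀ x y : L, ⁅J x, J y⁆ = ⁅x, y⁆ := by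
  obtain ⟨⟨hJ2, hN⟩, -, -⟩ := hK
  exact nilpotent_kahler_classification' hdim hnab J hJ2 hN
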